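/- The matrices M_a = [[1,2],[0,1]] and M_b = [[1,0],[2,1]] in SL(2,ℤ) generate a free group of rank 2; equivalently, no nontrivial reduced word in M_a, M_b and their inverses equals the identity matrix. -/

import Mathlib

/-- The matrix [[1,2],[0,1]] as an element of SL(2,ℤ). -/
def Ma : Matrix.SpecialLinearGroup (Fin 2) ℤ :=
  ⟨!![1, 2; 0, 1], by simp [Matrix.det_fin_two_of]⟩

/-- The matrix [[1,0],[2,1]] as an element of SL(2,ℤ). -/
def Mb : Matrix.SpecialLinearGroup (Fin 2) ℤ :=
  ⟨!![1, 0; 2, 1], by simp [Matrix.det_fin_two_of]⟩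

abbrev PPV := {v : Fin 2 → ℤ // v ≠ 0}

instance : MulAction (Matrix.SpecialLinearGroup (Fin 2) ℤ) PPV where
  smul g v := ⟨(g : Matrix (Fin 2) (Fin 2) ℤ).mulVec v.1, by
    intro h
    apply v.2
    have := congrArg ((g⁻¹ : Matrix.SpecialLinearGroup (Fin 2) ℤ) : Matrix (Fin 2) (Fin 2) ℤ).mulVec h
    rw [Matrix.mulVec_mulVec, ← Matrix.SpecialLinearGroup.coe_mul, inv_mul_cancel,
      Matrix.SpecialLinearGroup.coe_one, Matrix.one_mulVec, Matrix.mulVec_zero] at this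
    exact this⟩
  one_smul v := Subtype.ext (by simp [HSMul.hSMul, SMul.smul])
  mul_smul g h v := Subtype.ext (by
    show ((g * h : Matrix.SpecialLinearGroup (Fin 2) ℤ) : Matrix (Fin 2) (Fin 2) ℤ).mulVec v.1 =
      (g : Matrix (Fin 2) (Fin 2) ℤ).mulVec ((h : Matrix (Fin 2) (Fin 2) ℤ).mulVec v.1)
    rw [Matrix.SpecialLinearGroup.coe_mul, Matrix.mulVec_mulVec])

lemma ppv_smul_coe (g : Matrix.SpecialLinearGroup (Fin 2) ℤ) (v : PPV) :
    (g • v).1 = (g : Matrix (Fin 2) (Fin 2) ℤ).mulVec v.1 := rfl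

lemma Ma_smul (v : PPV) : (Ma • v).1 = ![v.1 0 + 2 * v.1 1, v.1 1] := by
  funext k; fin_cases k <;>
    · rw [ppv_smul_coe]
      simp [ppv_smul_coe, Ma, Matrix.mulVec, dotProduct, Fin.sum_univ_two]
      try ring

lemma Ma_inv_smul (v : PPV) : (Ma⁻¹ • v).1 = ![v.1 0 - 2 * v.1 1, v.1 1] := by
  funext k; fin_cases k <;>
    · rw [ppv_smul_coe, Matrix.SpecialLinearGroup.coe_inv]
      simp [ppv_smul_coe, Matrix.SpecialLinearGroup.coe_inv, Ma, Matrix.adjugate_fin_two,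
        Matrix.mulVec, dotProduct, Fin.sum_univ_two]
      try ring

lemma Mb_smul (v : PPV) : (Mb • v).1 = ![v.1 0, 2 * v.1 0 + v.1 1] := by
  funext k; fin_cases k <;>
    · rw [ppv_smul_coe]
      simp [ppv_smul_coe, Mb, Matrix.mulVec, dotProduct, Fin.sum_univ_two]
      try ring

lemma Mb_inv_smul (v : PPV) : (Mb⁻¹ • v).1 = ![v.1 0, v.1 1 - 2 * v.1 0] := by
  funext k; fin_cases k <;>
    · rw [ppv_smul_coe, Matrix.SpecialLinearGroup.coe_inv]
      simp [ppv_smul_coe, Matrix.SpecialLinearGroup.coe_inv, Mb, Matrix.adjugate_fin_two,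
        Matrix.mulVec, dotProduct, Fin.sum_univ_two]
      try ring

/-- The ping-pong sets for the positive generators. -/
def ppX : Fin 2 → Set PPV :=
  ![{v | v.1 1 = 0 ∨ (0 < v.1 0 ∧ 0 < v.1 1 ∧ v.1 1 ≤ v.1 0) ∨ (v.1 0 < 0 ∧ v.1 1 < 0 ∧ v.1 0 ≤ v.1 1)},
    {v | v.1 0 = 0 ∨ (0 < v.1 0 ∧ 0 < v.1 1 ∧ v.1 0 < v.1 1) ∨ (v.1 0 < 0 ∧ v.1 1 < 0 ∧ v.1 1 < v.1 0)}]

/-- The ping-pong sets for the inverse generators. -/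
def ppY : Fin 2 → Set PPV :=
  ![{v | (0 < v.1 0 ∧ v.1 1 < 0 ∧ -v.1 1 < v.1 0) ∨ (v.1 0 < 0 ∧ 0 < v.1 1 ∧ v.1 1 < -v.1 0)},
    {v | (0 < v.1 0 ∧ v.1 1 < 0 ∧ v.1 0 ≤ -v.1 1) ∨ (v.1 0 < 0 ∧ 0 < v.1 1 ∧ -v.1 0 ≤ v.1 1)}]

lemma ppv_cases (v : PPV) : v.1 0 ≠ 0 ∨ v.1 1 ≠ 0 := by
  by_contra h
  push_neg at h
  apply v.2
  funext k; fin_cases k <;> simp [h.1, h.2]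

/-- M_a and M_b generate a free group of rank 2: the evaluation homomorphism
from the free group on two generators is injective. -/
theorem Ma_Mb_generate_free_group :
    Function.Injective ⇑(FreeGroup.lift (![Ma, Mb] : Fin 2 → Matrix.SpecialLinearGroup (Fin 2) ℤ)) := by
  apply FreeGroup.injective_lift_of_ping_pong (![Ma, Mb]) ppX ppY
  · intro i
    fin_cases i
    · exact ⟨⟨![1, 0], by intro h; simpa using congrFun h 0⟩, by simp [ppX]⟩
    · exact ⟨⟨![0, 1], by intro h; simpa using congrFun h 1⟩, by simp [ppX]⟩
  · intro i j hij
    fin_cases i <;> fin_cases j <;> simp only [Function.onFun] <;> first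
    | exact absurd rfl hij
    | · rw [Set.disjoint_left]
        intro v hv hv'
        simp only [ppX, Fin.mk_zero, Fin.mk_one, Fin.isValue, Set.mem_setOf_eq, Matrix.cons_val_zero, Matrix.cons_val_one,
          Matrix.head_cons] at hv hv'
        rcases ppv_cases v with h | h <;> omega
  · intro i j hij
    fin_cases i <;> fin_cases j <;> simp only [Function.onFun] <;> first
    | exact absurd rfl hij
    | · rw [Set.disjoint_left]
        intro v hv hv'
        simp only [ppY, Fin.mk_zero, Fin.mk_one, Fin.isValue, Set.mem_setOf_eq, Matrix.cons_val_zero, Matrix.cons_val_one,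
          Matrix.head_cons] at hv hv'
        omega
  · intro i j
    fin_cases i <;> fin_cases j <;>
    · rw [Set.disjoint_left]
      intro v hv hv'
      simp only [ppX, ppY, Fin.mk_zero, Fin.mk_one, Fin.isValue, Set.mem_setOf_eq, Matrix.cons_val_zero, Matrix.cons_val_one,
        Matrix.head_cons] at hv hv'
      omega
  · intro i
    fin_cases i
    · rintro _ ⟨v, hv, rfl⟩
      simp only [ppX, ppY, Fin.mk_zero, Fin.mk_one, Fin.isValue, Set.mem_compl_iff, Set.mem_setOf_eq, Matrix.cons_val_zero,
        Matrix.cons_val_one, Matrix.head_cons, Ma_smul] at hv ⊢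
      omega
    · rintro _ ⟨v, hv, rfl⟩
      simp only [ppX, ppY, Fin.mk_zero, Fin.mk_one, Fin.isValue, Set.mem_compl_iff, Set.mem_setOf_eq, Matrix.cons_val_zero,
        Matrix.cons_val_one, Matrix.head_cons, Mb_smul] at hv ⊢
      omega
  · intro i
    fin_cases i
    · rintro _ ⟨v, hv, rfl⟩
      simp only [ppX, ppY, Pi.inv_apply, Fin.mk_zero, Fin.mk_one, Fin.isValue, Set.mem_compl_iff, Set.mem_setOf_eq,
        Matrix.cons_val_zero, Matrix.cons_val_one, Matrix.head_cons, Ma_inv_smul] at hv ⊢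
      rcases ppv_cases v with h | h <;> omega
    · rintro _ ⟨v, hv, rfl⟩
      simp only [ppX, ppY, Pi.inv_apply, Fin.mk_zero, Fin.mk_one, Fin.isValue, Set.mem_compl_iff, Set.mem_setOf_eq,
        Matrix.cons_val_zero, Matrix.cons_val_one, Matrix.head_cons, Mb_inv_smul] at hv ⊢
      rcases ppv_cases v with h | h <;> omega
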